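/- arXiv:1607.00881 — 2 statements merged into one kernel-verified Lean document; each statement's English description precedes it below -/
import Mathlib

section
/- Let H be a Hermitian m×m complex Hamiltonian, ρ0 a density matrix on ℂ^m, ρ(t) = exp(−iHt/ħ) ρ0 exp(iHt/ħ), and P an orthogonal projection commuting with H. Set σ^N(t) = P ρ(t) P, δ_N = ‖ρ0 − σ^N(0)‖_F², P_N = tr(σ^N(0)), and assume P_N > 0, with normalization σ̃^N(t) = σ^N(t)/P_N. Then for every t ∈ ℝ: ‖ρ(t) − ρ0‖_F ≤ 2√δ_N + P_N · ‖σ̃^N(t) − σ̃^N(0)‖_F. -/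
open Matrix MeasureTheory Real
open scoped Classical ComplexOrder

/-- The positive semidefinite square root of a matrix (junk value `0` if the matrix is not
positive semidefinite). -/
noncomputable def matSqrt {n : ℕ} (A : Matrix (Fin n) (Fin n) ℂ) : Matrix (Fin n) (Fin n) ℂ :=
  if h : A.PosSemidef then
    (h.1.eigenvectorUnitary : Matrix (Fin n) (Fin n) ℂ) *
      diagonal ((↑) ∘ (√·) ∘ h.1.eigenvalues) *
      (star h.1.eigenvectorUnitary : Matrix (Fin n) (Fin n) ℂ)
  else 0

/-- The unitary time evolution `exp(-iHt/h) A exp(iHt/h)`. -/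
noncomputable def evol {n : ℕ} (ℏ : ℝ) (H A : Matrix (Fin n) (Fin n) ℂ) (t : ℝ) :
    Matrix (Fin n) (Fin n) ℂ :=
  NormedSpace.exp ((-(Complex.I * t / ℏ)) • H) * A * NormedSpace.exp ((Complex.I * t / ℏ) • H)

/-- The Frobenius (Hilbert–Schmidt) norm `√(tr(A†A))` of a matrix. -/
noncomputable def frobNorm {n : ℕ} (A : Matrix (Fin n) (Fin n) ℂ) : ℝ :=
  Real.sqrt (((Aᴴ * A).trace).re)

section ExpFacts

lemma exp_mul_exp_neg {n : ℕ} (H : Matrix (Fin n) (Fin n) ℂ) (c : ℂ) :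
    NormedSpace.exp (c • H) * NormedSpace.exp ((-c) • H) = 1 := by
  rw [← Matrix.exp_add_of_commute (c • H) ((-c) • H)
    (((Commute.refl H).smul_left c).smul_right (-c)), ← add_smul]
  simp

lemma conj_trace_eq {n : ℕ} (U A : Matrix (Fin n) (Fin n) ℂ) (h : Uᴴ * U = 1) :
    ((U * A * Uᴴ)ᴴ * (U * A * Uᴴ)).trace = (Aᴴ * A).trace := by
  have key : (U * A * Uᴴ)ᴴ * (U * A * Uᴴ) = U * (Aᴴ * A) * Uᴴ := by
    simp only [Matrix.conjTranspose_mul, Matrix.conjTranspose_conjTranspose, Matrix.mul_assoc]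
    rw [show Uᴴ * (U * (A * Uᴴ)) = (Uᴴ * U) * (A * Uᴴ) by rw [Matrix.mul_assoc], h, Matrix.one_mul]
  rw [key, Matrix.trace_mul_cycle, ← Matrix.mul_assoc, h, Matrix.one_mul]

lemma evol_sub {n : ℕ} (ℏ : ℝ) (H A B : Matrix (Fin n) (Fin n) ℂ) (t : ℝ) :
    evol ℏ H (A - B) t = evol ℏ H A t - evol ℏ H B t := by
  simp [evol, mul_sub, sub_mul]

lemma evol_zero {n : ℕ} (ℏ : ℝ) (H A : Matrix (Fin n) (Fin n) ℂ) :
    evol ℏ H A 0 = A := by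
  simp [evol, NormedSpace.exp_zero]

lemma frobNorm_evol {n : ℕ} (ℏ : ℝ) (H : Matrix (Fin n) (Fin n) ℂ) (hH : H.IsHermitian)
    (A : Matrix (Fin n) (Fin n) ℂ) (t : ℝ) : frobNorm (evol ℏ H A t) = frobNorm A := by
  set c : ℂ := Complex.I * t / ℏ with hc
  have hstar : star (-c) = c := by
    rw [Complex.star_def]
    simp [hc, div_eq_mul_inv]
  have hUH : (NormedSpace.exp ((-c) • H))ᴴ = NormedSpace.exp (c • H) := by
    rw [← Matrix.exp_conjTranspose, Matrix.conjTranspose_smul, hstar, hH.eq]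
  have h1 : (NormedSpace.exp ((-c) • H))ᴴ * NormedSpace.exp ((-c) • H) = 1 := by
    rw [hUH]; exact exp_mul_exp_neg H c
  have hev : evol ℏ H A t =
      NormedSpace.exp ((-c) • H) * A * (NormedSpace.exp ((-c) • H))ᴴ := by
    rw [evol, hUH, hc, neg_smul]
  rw [frobNorm, hev, conj_trace_eq _ _ h1, frobNorm]

lemma sigma_conj {n : ℕ} (ℏ : ℝ) (H P A : Matrix (Fin n) (Fin n) ℂ)
    (hPH : P * H = H * P) (t : ℝ) :
    P * evol ℏ H A t * P = evol ℏ H (P * A * P) t := by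
  have h1 : ∀ c : ℂ, P * NormedSpace.exp (c • H) = NormedSpace.exp (c • H) * P :=
    fun c => (((show Commute P H from hPH).smul_right c).exp_right)
  rw [evol, evol]
  have e1 : P * (NormedSpace.exp ((-(Complex.I * t / ℏ)) • H) * A *
        NormedSpace.exp ((Complex.I * t / ℏ) • H)) * P =
      (P * NormedSpace.exp ((-(Complex.I * t / ℏ)) • H)) *
        (A * (NormedSpace.exp ((Complex.I * t / ℏ) • H) * P)) := by noncomm_ring
  rw [e1, h1, (h1 ((Complex.I * t / ℏ))).symm]
  noncomm_ring

end ExpFacts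

section NormFacts

attribute [local instance] Matrix.frobeniusNormedAddCommGroup Matrix.frobeniusNormedSpace

lemma frobNorm_eq_norm {n : ℕ} (A : Matrix (Fin n) (Fin n) ℂ) : frobNorm A = ‖A‖ := by
  rw [frobNorm, Matrix.frobenius_norm_def, ← Real.sqrt_eq_rpow]
  congr 1
  rw [Matrix.trace]
  simp only [Matrix.diag, Matrix.mul_apply, Matrix.conjTranspose_apply, Complex.re_sum]
  rw [Finset.sum_comm]
  refine Finset.sum_congr rfl fun i _ => Finset.sum_congr rfl fun j _ => ?_
  rw [Real.rpow_two, Complex.star_def, ← Complex.normSq_eq_conj_mul_self, Complex.ofReal_re]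
  simp [Complex.normSq_eq_norm_sq]

theorem triangle_inequality_relevant_states {m : ℕ} (ℏ : ℝ) (hℏ : 0 < ℏ)
    (H ρ0 : Matrix (Fin m) (Fin m) ℂ)
    (hH : H.IsHermitian) (hρ0 : ρ0.PosSemidef) (htr : ρ0.trace = 1)
    (P : Matrix (Fin m) (Fin m) ℂ)
    (hP : P.IsHermitian) (hProj : P * P = P) (hPH : P * H = H * P)
    (σN : ℝ → Matrix (Fin m) (Fin m) ℂ) (hσN : ∀ t, σN t = P * evol ℏ H ρ0 t * P)
    (δN : ℝ) (hδN : δN = (frobNorm (ρ0 - σN 0)) ^ 2)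
    (PN : ℝ) (hPN : PN = ((σN 0).trace).re) (hPNpos : 0 < PN)
    (σNt : ℝ → Matrix (Fin m) (Fin m) ℂ)
    (hσNt : ∀ t, σNt t = ((PN : ℂ))⁻¹ • σN t) :
    ∀ t : ℝ, frobNorm (evol ℏ H ρ0 t - ρ0) ≤
      2 * Real.sqrt δN + PN * frobNorm (σNt t - σNt 0) := by
  intro t
  have hσ0 : σN 0 = P * ρ0 * P := by rw [hσN 0, evol_zero]
  have hσt : σN t = evol ℏ H (σN 0) t := by
    rw [hσN t, sigma_conj _ _ _ _ hPH, hσ0]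
  have hsqrt : Real.sqrt δN = frobNorm (ρ0 - σN 0) := by
    rw [hδN]
    exact Real.sqrt_sq (show (0:ℝ) ≤ frobNorm (ρ0 - σN 0) from Real.sqrt_nonneg _)
  have key : evol ℏ H ρ0 t - ρ0 =
      evol ℏ H (ρ0 - σN 0) t + (σN t - σN 0) + (σN 0 - ρ0) := by
    rw [evol_sub, ← hσt]; abel
  have h1 : ‖evol ℏ H (ρ0 - σN 0) t‖ = Real.sqrt δN := by
    rw [← frobNorm_eq_norm, frobNorm_evol _ _ hH, hsqrt]
  have h3 : ‖σN 0 - ρ0‖ = Real.sqrt δN := by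
    rw [norm_sub_rev, ← frobNorm_eq_norm, hsqrt]
  have h2 : PN * frobNorm (σNt t - σNt 0) = ‖σN t - σN 0‖ := by
    rw [frobNorm_eq_norm, hσNt, hσNt, ← smul_sub, norm_smul]
    simp only [norm_inv, Complex.norm_real, Real.norm_eq_abs,
      abs_of_pos hPNpos]
    field_simp
  rw [frobNorm_eq_norm, key]
  calc ‖evol ℏ H (ρ0 - σN 0) t + (σN t - σN 0) + (σN 0 - ρ0)‖
      ≤ ‖evol ℏ H (ρ0 - σN 0) t‖ + ‖σN t - σN 0‖ + ‖σN 0 - ρ0‖ := norm_add₃_le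
    _ = 2 * Real.sqrt δN + PN * frobNorm (σNt t - σNt 0) := by
        rw [h1, h2, h3]; ring

end NormFacts
end

section
/- Let H be a Hermitian n×n complex Hamiltonian, ħ > 0, λ ∈ ℝ, let ρ0 be a density matrix and W ∈ M_n(ℂ) a matrix with WW† = ρ0 (for instance W = √ρ0). Consider the curve γ(t) = exp(−it(H−λI)/ħ)·W in M_n(ℂ). Then for every t, the Frobenius norm of the derivative satisfies ‖γ′(t)‖_F = (1/ħ)·√(tr((H−λI)² ρ0)); in particular, for λ = tr(Hρ0) one has ‖γ′(t)‖_F = ΔE_{ρ0}/ħ, where ΔE_{ρ0} = √(tr(H²ρ0) − tr(Hρ0)²). Consequently the length of γ on [0,t] equals t·√(tr((H−λI)²ρ0))/ħ. -/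
open Matrix Real
open scoped ComplexOrder

attribute [local instance] Matrix.frobeniusNormedAddCommGroup Matrix.frobeniusNormedSpace

theorem speed_of_evolution_curve {n : ℕ} (ℏ : ℝ) (hℏ : 0 < ℏ) (lam : ℝ)
    (H ρ0 W : Matrix (Fin n) (Fin n) ℂ)
    (hH : H.IsHermitian) (hρ0 : ρ0.PosSemidef) (htr : ρ0.trace = 1)
    (hW : W * Wᴴ = ρ0)
    (γ : ℝ → Matrix (Fin n) (Fin n) ℂ)
    (hγ : ∀ t : ℝ, γ t = NormedSpace.exp
      ((-(Complex.I * t / ℏ)) • (H - (lam : ℂ) • (1 : Matrix (Fin n) (Fin n) ℂ))) * W)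
    (γ' : ℝ → Matrix (Fin n) (Fin n) ℂ)
    (hγ' : ∀ s : ℝ, HasDerivAt γ (γ' s) s) :
    (∀ t : ℝ, Real.sqrt ((((γ' t)ᴴ * γ' t).trace).re) =
      (1 / ℏ) * Real.sqrt ((((H - (lam : ℂ) • 1) * (H - (lam : ℂ) • 1) * ρ0).trace).re)) ∧
    ((lam : ℂ) = (H * ρ0).trace →
      ∀ t : ℝ, Real.sqrt ((((γ' t)ᴴ * γ' t).trace).re) =
        Real.sqrt (((H * H * ρ0).trace).re - (((H * ρ0).trace).re) ^ 2) / ℏ) ∧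
    (∀ t : ℝ, 0 ≤ t →
      ∫ s in (0 : ℝ)..t, Real.sqrt ((((γ' s)ᴴ * γ' s).trace).re) =
        t * Real.sqrt ((((H - (lam : ℂ) • 1) * (H - (lam : ℂ) • 1) * ρ0).trace).re) / ℏ) := by
  letI : NormedRing (Matrix (Fin n) (Fin n) ℂ) := Matrix.frobeniusNormedRing
  letI : NormedAlgebra ℂ (Matrix (Fin n) (Fin n) ℂ) := Matrix.frobeniusNormedAlgebra
  letI : NormedAlgebra ℝ (Matrix (Fin n) (Fin n) ℂ) := Matrix.frobeniusNormedAlgebra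
  set A : Matrix (Fin n) (Fin n) ℂ := H - (lam : ℂ) • 1 with hA_def
  have hAH : Aᴴ = A := by
    simp [hA_def, conjTranspose_smul, hH.eq, Complex.conj_ofReal]
  set B : Matrix (Fin n) (Fin n) ℂ := (-(Complex.I / ℏ)) • A with hB_def
  have hBH : Bᴴ = -B := by
    have hc : star (-(Complex.I / (ℏ : ℂ))) = Complex.I / (ℏ : ℂ) := by
      simp [Complex.star_def, Complex.conj_ofReal]
      ring
    rw [hB_def, conjTranspose_smul, hAH, hc, neg_smul, neg_neg]
  have hγeq : ∀ t : ℝ, γ t = NormedSpace.exp ((t : ℂ) • B) * W := by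
    intro t
    rw [hγ t, hB_def, smul_smul]
    congr 2
    push_cast
    ring
  have hkey : ∀ t : ℝ, γ' t = NormedSpace.exp ((t : ℂ) • B) * B * W := by
    intro t
    have hd : HasDerivAt (fun s : ℝ => NormedSpace.exp ((s : ℂ) • B) * W)
        (NormedSpace.exp ((t : ℂ) • B) * B * W) t := by
      have h1 : HasDerivAt (fun z : ℂ => NormedSpace.exp (z • B))
          (NormedSpace.exp ((t : ℂ) • B) * B) (t : ℂ) :=
        hasDerivAt_exp_smul_const B (t : ℂ)
      have h0 : HasDerivAt (fun s : ℝ => (s : ℂ)) (1 : ℂ) t := by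
        simpa using! Complex.ofRealCLM.hasDerivAt (x := t)
      have h2 := h1.scomp (h := fun s : ℝ => (s : ℂ)) (x := t) h0
      simp only [one_smul, Function.comp_def] at h2
      exact h2.mul_const W
    have hd' : HasDerivAt γ (NormedSpace.exp ((t : ℂ) • B) * B * W) t := by
      apply hd.congr_of_eventuallyEq
      filter_upwards with s using hγeq s
    exact (hγ' t).unique hd'
  -- conjugate-transpose of exp
  have hEinv : ∀ t : ℝ, (NormedSpace.exp ((t : ℂ) • B))ᴴ *
      NormedSpace.exp ((t : ℂ) • B) = 1 := by
    intro t
    have h1 : (NormedSpace.exp ((t : ℂ) • B))ᴴ = NormedSpace.exp (-((t : ℂ) • B)) := by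
      rw [← Matrix.exp_conjTranspose]
      congr 1
      rw [conjTranspose_smul, hBH]
      simp [Complex.conj_ofReal]
    rw [h1, ← Matrix.exp_add_of_commute _ _ ((Commute.refl ((t : ℂ) • B)).neg_left)]
    simp
  have hBB : Bᴴ * B = ((1 / (ℏ : ℂ) ^ 2)) • (A * A) := by
    rw [hBH, hB_def, neg_smul, neg_neg, smul_mul_assoc, Matrix.mul_neg, mul_smul_comm,
      smul_neg, smul_smul, ← neg_smul]
    congr 1
    rw [div_mul_div_comm, Complex.I_mul_I]
    ring
  have htrace : ∀ t : ℝ, ((γ' t)ᴴ * γ' t).trace = (1 / (ℏ : ℂ) ^ 2) * (A * A * ρ0).trace := by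
    intro t
    set E := NormedSpace.exp ((t : ℂ) • B) with hE
    have h1 : (γ' t)ᴴ * γ' t = Wᴴ * ((Bᴴ * (Eᴴ * E)) * (B * W)) := by
      rw [hkey t]
      simp only [conjTranspose_mul, Matrix.mul_assoc]
      rfl
    have h2 : Wᴴ * (Bᴴ * (B * W)) = Wᴴ * ((Bᴴ * B) * W) := by
      rw [Matrix.mul_assoc]
    rw [h1, hEinv t, Matrix.mul_one, h2, hBB, smul_mul_assoc, mul_smul_comm,
      Matrix.trace_smul, Matrix.trace_mul_comm, Matrix.mul_assoc, hW, smul_eq_mul]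
  have hre : ∀ t : ℝ, (((γ' t)ᴴ * γ' t).trace).re = (1 / ℏ ^ 2) * ((A * A * ρ0).trace).re := by
    intro t
    rw [htrace t]
    have : (1 / (ℏ : ℂ) ^ 2) = ((1 / ℏ ^ 2 : ℝ) : ℂ) := by push_cast; ring
    rw [this, Complex.re_ofReal_mul]
  have hℏ' : (0 : ℝ) < 1 / ℏ := by positivity
  have part1 : ∀ t : ℝ, Real.sqrt ((((γ' t)ᴴ * γ' t).trace).re) =
      (1 / ℏ) * Real.sqrt (((A * A * ρ0).trace).re) := by
    intro t
    rw [hre t]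
    have : (1 / ℏ ^ 2 : ℝ) = (1 / ℏ) ^ 2 := by ring
    rw [this, Real.sqrt_mul (sq_nonneg _), Real.sqrt_sq hℏ'.le]
  refine ⟨part1, ?_, ?_⟩
  · intro hlam t
    rw [part1 t]
    have hAA : (A * A * ρ0).trace = (H * H * ρ0).trace - (lam : ℂ) ^ 2 := by
      have hexp : A * A * ρ0 = H * H * ρ0 - ((2 * lam : ℂ)) • (H * ρ0)
          + ((lam : ℂ) ^ 2) • ρ0 := by
        rw [hA_def]
        simp only [Matrix.sub_mul, Matrix.mul_sub, Matrix.smul_mul, Matrix.mul_smul,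
          Matrix.one_mul, Matrix.mul_one, smul_smul, Matrix.sub_mul, Matrix.add_mul]
        module
      rw [hexp]
      simp only [Matrix.trace_add, Matrix.trace_sub, Matrix.trace_smul, htr, smul_eq_mul,
        mul_one, ← hlam]
      ring
    have hlam_re : ((H * ρ0).trace).re = lam := by rw [← hlam]; simp
    rw [hAA]
    have : ((H * H * ρ0).trace - (lam : ℂ) ^ 2).re = ((H * H * ρ0).trace).re - lam ^ 2 := by
      rw [Complex.sub_re, ← Complex.ofReal_pow, Complex.ofReal_re]
    rw [this, hlam_re, one_div, inv_mul_eq_div]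
  · intro t ht
    have : ∀ s : ℝ, Real.sqrt ((((γ' s)ᴴ * γ' s).trace).re) =
        (1 / ℏ) * Real.sqrt (((A * A * ρ0).trace).re) := part1
    rw [intervalIntegral.integral_congr (g := fun _ =>
      (1 / ℏ) * Real.sqrt (((A * A * ρ0).trace).re)) (fun s _ => this s)]
    rw [intervalIntegral.integral_const]
    simp only [sub_zero, smul_eq_mul]
    ring
end
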